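/- There exists a sequence of positive reals (ε_T)_{T≥1} with ε_T → 0 such that, ℙ-almost surely, the inequality Σ_{p ∈ D} ‖ (1/T) Σ_{t=1}^T 1{p_t = p} (δ_{X_t} − p) ‖ ≤ ε_T holds for all but finitely many T. In words: the honest forecaster, who at each period announces the conditional law p_t of that period's state, fails the ε_T-calibration test only finitely many times almost surely. -/

import Mathlib

set_option maxHeartbeats 1000000

open Filter MeasureTheory

noncomputable section

namespace CalibAux

variable {Ξ : Type*} {m0 : MeasurableSpace Ξ} (ℙ : Measure Ξ) [IsProbabilityMeasure ℙ]

lemma abs_mul_le' {a b A B : ℝ} (ha : |a| ≤ A) (hb : |b| ≤ B) : |a * b| ≤ A * B := by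
  rw [abs_mul]
  exact mul_le_mul ha hb (abs_nonneg _) ((abs_nonneg a).trans ha)

lemma abs_pow_le' {a A : ℝ} (ha : |a| ≤ A) (k : ℕ) : |a ^ k| ≤ A ^ k := by
  rw [abs_pow]
  exact pow_le_pow_left₀ (abs_nonneg _) ha k

lemma int_bdd {f : Ξ → ℝ} (hf : Measurable f) {C : ℝ} (h : ∀ ξ, |f ξ| ≤ C) :
    Integrable f ℙ :=
  (memLp_top_of_bound hf.aestronglyMeasurable C
    (Filter.Eventually.of_forall fun ξ => by simpa [Real.norm_eq_abs] using h ξ)).integrable le_top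

lemma integral_mul_eq_zero (𝒢 : Filtration ℕ m0) (T : ℕ) {f g : Ξ → ℝ} {C B : ℝ}
    (hf : Measurable[𝒢 T] f) (hfb : ∀ ξ, |f ξ| ≤ C)
    (hg : Measurable g) (hgb : ∀ ξ, |g ξ| ≤ B)
    (hg0 : ℙ[g | 𝒢 T] =ᵐ[ℙ] 0) :
    ∫ ξ, f ξ * g ξ ∂ℙ = 0 := by
  have hfm0 : Measurable f := hf.mono (𝒢.le T) le_rfl
  have hgi : Integrable g ℙ := int_bdd ℙ hg hgb
  have hfgi : Integrable (f * g) ℙ :=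
    int_bdd ℙ (hfm0.mul hg) (fun ξ => abs_mul_le' (hfb ξ) (hgb ξ))
  have h1 : ℙ[f * g | 𝒢 T] =ᵐ[ℙ] f * ℙ[g | 𝒢 T] :=
    condExp_mul_of_stronglyMeasurable_left hf.stronglyMeasurable hfgi hgi
  have h2 : ℙ[f * g | 𝒢 T] =ᵐ[ℙ] 0 := by
    refine h1.trans ?_
    filter_upwards [hg0] with ξ hξ
    simp [Pi.mul_apply, hξ]
  calc ∫ ξ, f ξ * g ξ ∂ℙ = ∫ ξ, (ℙ[f * g | 𝒢 T]) ξ ∂ℙ :=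
        (integral_condExp (𝒢.le T)).symm
    _ = 0 := by rw [integral_congr_ae h2]; simp

/-- Second and fourth moment bounds for sums of bounded martingale differences. -/
lemma moments (𝒢 : Filtration ℕ m0) (Y : ℕ → Ξ → ℝ) (B : ℝ) (hB : 1 ≤ B)
    (hYm : ∀ t, Measurable[𝒢 (t + 1)] (Y t))
    (hYb : ∀ t ξ, |Y t ξ| ≤ B)
    (hY0 : ∀ t, ℙ[Y t | 𝒢 t] =ᵐ[ℙ] 0) (T : ℕ) :
    (∫ ξ, (∑ t ∈ Finset.range T, Y t ξ) ^ 2 ∂ℙ ≤ B ^ 2 * T) ∧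
    (∫ ξ, (∑ t ∈ Finset.range T, Y t ξ) ^ 4 ∂ℙ ≤ 11 * B ^ 4 * T ^ 2) := by
  have hB0 : (0:ℝ) < B := lt_of_lt_of_le one_pos hB
  set S : ℕ → Ξ → ℝ := fun T ξ => ∑ t ∈ Finset.range T, Y t ξ with hSdef
  have hYm0 : ∀ t, Measurable (Y t) := fun t => (hYm t).mono (𝒢.le (t + 1)) le_rfl
  have hSm : ∀ T, Measurable[𝒢 T] (S T) := by
    intro T
    apply Finset.measurable_sum
    intro t ht
    exact (hYm t).mono (𝒢.mono (Finset.mem_range.mp ht)) le_rfl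
  have hSm0 : ∀ T, Measurable (S T) := fun T => (hSm T).mono (𝒢.le T) le_rfl
  have hSb : ∀ T ξ, |S T ξ| ≤ B * T := by
    intro T ξ
    calc |S T ξ| ≤ ∑ t ∈ Finset.range T, |Y t ξ| := Finset.abs_sum_le_sum_abs _ _
      _ ≤ ∑ _t ∈ Finset.range T, B := Finset.sum_le_sum fun t _ => hYb t ξ
      _ = B * T := by simp [mul_comm]
  -- integrability of monomials
  have hint : ∀ T (a b : ℕ), Integrable (fun ξ => S T ξ ^ a * Y T ξ ^ b) ℙ := by
    intro T a b
    exact int_bdd ℙ (((hSm0 T).pow_const a).mul ((hYm0 T).pow_const b))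
      (fun ξ => abs_mul_le' (abs_pow_le' (hSb T ξ) a) (abs_pow_le' (hYb T ξ) b))
  have hkey : ∀ T (k : ℕ), ∫ ξ, S T ξ ^ k * Y T ξ ∂ℙ = 0 := by
    intro T k
    exact integral_mul_eq_zero ℙ 𝒢 T ((hSm T).pow_const k)
      (fun ξ => abs_pow_le' (hSb T ξ) k) (hYm0 T) (hYb T) (hY0 T)
  induction T with
  | zero => simp [S]
  | succ T ih =>
    obtain ⟨ih2, ih4⟩ := ih
    have hexp : ∀ ξ, S (T + 1) ξ = S T ξ + Y T ξ := fun ξ => Finset.sum_range_succ _ _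
    have hTc : (0:ℝ) ≤ (T:ℝ) := Nat.cast_nonneg T
    -- second moment
    have iS2 : Integrable (fun ξ => S T ξ ^ 2) ℙ := by simpa using hint T 2 0
    have iSY : Integrable (fun ξ => 2 * (S T ξ * Y T ξ)) ℙ := by
      simpa using (hint T 1 1).const_mul 2
    have iY2 : Integrable (fun ξ => Y T ξ ^ 2) ℙ := by simpa using hint T 0 2
    have h2 : ∫ ξ, S (T + 1) ξ ^ 2 ∂ℙ
        = ∫ ξ, S T ξ ^ 2 ∂ℙ + (2 * ∫ ξ, S T ξ * Y T ξ ∂ℙ + ∫ ξ, Y T ξ ^ 2 ∂ℙ) := by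
      have e1 : ∫ ξ, S (T + 1) ξ ^ 2 ∂ℙ
          = ∫ ξ, (S T ξ ^ 2 + (2 * (S T ξ * Y T ξ) + Y T ξ ^ 2)) ∂ℙ :=
        integral_congr_ae (Filter.Eventually.of_forall fun ξ => by simp only [hexp]; ring)
      have iR : Integrable (fun ξ => 2 * (S T ξ * Y T ξ) + Y T ξ ^ 2) ℙ := iSY.add iY2
      rw [e1, integral_add iS2 iR, integral_add iSY iY2, integral_const_mul]
    have hy2 : ∫ ξ, Y T ξ ^ 2 ∂ℙ ≤ B ^ 2 := by
      calc ∫ ξ, Y T ξ ^ 2 ∂ℙ ≤ ∫ _ξ, B ^ 2 ∂ℙ := by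
            refine integral_mono (by simpa using hint T 0 2) (integrable_const _) fun ξ => ?_
            calc Y T ξ ^ 2 = |Y T ξ ^ 2| := (abs_of_nonneg (sq_nonneg _)).symm
              _ ≤ B ^ 2 := abs_pow_le' (hYb T ξ) 2
        _ = B ^ 2 := by simp
    have hS2 : ∫ ξ, S (T + 1) ξ ^ 2 ∂ℙ ≤ B ^ 2 * (T + 1 : ℕ) := by
      rw [h2, (by simpa using hkey T 1 : ∫ ξ, S T ξ * Y T ξ ∂ℙ = 0)]
      push_cast
      nlinarith [ih2]
    refine ⟨hS2, ?_⟩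
    -- fourth moment
    have iS4 : Integrable (fun ξ => S T ξ ^ 4) ℙ := by simpa using hint T 4 0
    have i31 : Integrable (fun ξ => 4 * (S T ξ ^ 3 * Y T ξ)) ℙ := by
      simpa using (hint T 3 1).const_mul 4
    have i22 : Integrable (fun ξ => 6 * (S T ξ ^ 2 * Y T ξ ^ 2)) ℙ := by
      simpa using (hint T 2 2).const_mul 6
    have i13 : Integrable (fun ξ => 4 * (S T ξ * Y T ξ ^ 3)) ℙ := by
      simpa using (hint T 1 3).const_mul 4
    have iY4 : Integrable (fun ξ => Y T ξ ^ 4) ℙ := by simpa using hint T 0 4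
    have h4 : ∫ ξ, S (T + 1) ξ ^ 4 ∂ℙ
        = ∫ ξ, S T ξ ^ 4 ∂ℙ + (4 * ∫ ξ, S T ξ ^ 3 * Y T ξ ∂ℙ
          + (6 * ∫ ξ, S T ξ ^ 2 * Y T ξ ^ 2 ∂ℙ
          + (4 * ∫ ξ, S T ξ * Y T ξ ^ 3 ∂ℙ + ∫ ξ, Y T ξ ^ 4 ∂ℙ))) := by
      have e4 : ∫ ξ, S (T + 1) ξ ^ 4 ∂ℙ
          = ∫ ξ, (S T ξ ^ 4 + (4 * (S T ξ ^ 3 * Y T ξ) + (6 * (S T ξ ^ 2 * Y T ξ ^ 2)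
            + (4 * (S T ξ * Y T ξ ^ 3) + Y T ξ ^ 4)))) ∂ℙ :=
        integral_congr_ae (Filter.Eventually.of_forall fun ξ => by simp only [hexp]; ring)
      have iR3 : Integrable (fun ξ => 4 * (S T ξ * Y T ξ ^ 3) + Y T ξ ^ 4) ℙ := i13.add iY4
      have iR2 : Integrable (fun ξ => 6 * (S T ξ ^ 2 * Y T ξ ^ 2)
          + (4 * (S T ξ * Y T ξ ^ 3) + Y T ξ ^ 4)) ℙ := i22.add iR3
      have iR1 : Integrable (fun ξ => 4 * (S T ξ ^ 3 * Y T ξ) + (6 * (S T ξ ^ 2 * Y T ξ ^ 2)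
          + (4 * (S T ξ * Y T ξ ^ 3) + Y T ξ ^ 4))) ℙ := i31.add iR2
      rw [e4, integral_add iS4 iR1, integral_add i31 iR2, integral_add i22 iR3,
        integral_add i13 iY4, integral_const_mul, integral_const_mul, integral_const_mul]
    have h31 : ∫ ξ, S T ξ ^ 3 * Y T ξ ∂ℙ = 0 := hkey T 3
    have h22 : ∫ ξ, S T ξ ^ 2 * Y T ξ ^ 2 ∂ℙ ≤ B ^ 2 * (B ^ 2 * T) := by
      calc ∫ ξ, S T ξ ^ 2 * Y T ξ ^ 2 ∂ℙ ≤ ∫ ξ, B ^ 2 * S T ξ ^ 2 ∂ℙ := by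
            refine integral_mono (hint T 2 2) ((by simpa using hint T 2 0 :
              Integrable (fun ξ => S T ξ ^ 2) ℙ).const_mul _) fun ξ => ?_
            have l1 : Y T ξ ^ 2 ≤ B ^ 2 := by
              calc Y T ξ ^ 2 = |Y T ξ ^ 2| := (abs_of_nonneg (sq_nonneg _)).symm
                _ ≤ B ^ 2 := abs_pow_le' (hYb T ξ) 2
            calc S T ξ ^ 2 * Y T ξ ^ 2 ≤ S T ξ ^ 2 * B ^ 2 :=
                  mul_le_mul_of_nonneg_left l1 (sq_nonneg _)
              _ = B ^ 2 * S T ξ ^ 2 := by ring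
        _ = B ^ 2 * ∫ ξ, S T ξ ^ 2 ∂ℙ := integral_const_mul _ _
        _ ≤ B ^ 2 * (B ^ 2 * T) := by
            refine mul_le_mul_of_nonneg_left ?_ (sq_nonneg B)
            simpa using ih2
    have h13 : ∫ ξ, S T ξ * Y T ξ ^ 3 ∂ℙ ≤ B * T * B ^ 3 := by
      calc ∫ ξ, S T ξ * Y T ξ ^ 3 ∂ℙ ≤ ∫ _ξ, B * T * B ^ 3 ∂ℙ := by
            refine integral_mono (by simpa using hint T 1 3) (integrable_const _) fun ξ => ?_
            calc S T ξ * Y T ξ ^ 3 ≤ |S T ξ * Y T ξ ^ 3| := le_abs_self _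
              _ ≤ B * T * B ^ 3 := abs_mul_le' (hSb T ξ) (abs_pow_le' (hYb T ξ) 3)
        _ = B * T * B ^ 3 := by simp
    have h04 : ∫ ξ, Y T ξ ^ 4 ∂ℙ ≤ B ^ 4 := by
      calc ∫ ξ, Y T ξ ^ 4 ∂ℙ ≤ ∫ _ξ, B ^ 4 ∂ℙ := by
            refine integral_mono (by simpa using hint T 0 4) (integrable_const _) fun ξ => ?_
            calc Y T ξ ^ 4 ≤ |Y T ξ ^ 4| := le_abs_self _
              _ ≤ B ^ 4 := abs_pow_le' (hYb T ξ) 4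
        _ = B ^ 4 := by simp
    rw [h4, h31]
    push_cast
    nlinarith [ih4, h22, h13, h04, sq_nonneg B, pow_pos hB0 4, hTc,
      mul_le_mul_of_nonneg_right (one_le_pow₀ hB (n := 4)) hTc]


section EuclidAux
variable {Ω : Type*} [Fintype Ω]

lemma euclid_sum_apply {ι : Type*} (s : Finset ι) (f : ι → EuclideanSpace ℝ Ω) (a : Ω) :
    (∑ i ∈ s, f i) a = ∑ i ∈ s, f i a := by
  induction s using Finset.cons_induction with
  | empty => simp
  | cons i s hi ih => rw [Finset.sum_cons, Finset.sum_cons, PiLp.add_apply, ih]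

lemma euclid_norm_le_sum_abs (v : EuclideanSpace ℝ Ω) : ‖v‖ ≤ ∑ a : Ω, |v a| := by
  rw [EuclideanSpace.norm_eq]
  have h1 : ∑ a : Ω, ‖v a‖ ^ 2 ≤ (∑ a : Ω, |v a|) ^ 2 := by
    rw [sq (∑ a : Ω, |v a|), Finset.sum_mul_sum]
    calc ∑ a : Ω, ‖v a‖ ^ 2 = ∑ a : Ω, |v a| * |v a| := by
          simp [Real.norm_eq_abs, sq]
      _ ≤ ∑ a : Ω, ∑ b : Ω, |v a| * |v b| := by
          refine Finset.sum_le_sum fun a _ => ?_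
          refine Finset.single_le_sum (f := fun b => |v a| * |v b|)
            (fun b _ => mul_nonneg (abs_nonneg _) (abs_nonneg _)) (Finset.mem_univ a)
  calc Real.sqrt (∑ a : Ω, ‖v a‖ ^ 2) ≤ Real.sqrt ((∑ a : Ω, |v a|) ^ 2) :=
        Real.sqrt_le_sqrt h1
    _ = ∑ a : Ω, |v a| := by
        rw [Real.sqrt_sq (Finset.sum_nonneg fun a _ => abs_nonneg _)]

end EuclidAux

end CalibAux

open CalibAux

variable {Ω : Type*} [Fintype Ω] [DecidableEq Ω]

/-- The Dirac point mass `δ_ω` as an element of the probability simplex in `ℝ^Ω`. -/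
def diracVec (ω : Ω) : EuclideanSpace ℝ Ω := WithLp.toLp 2 (fun a => if a = ω then 1 else 0)

open Classical in
/-- There is a sequence of positive error margins `ε_T → 0` such that, almost surely, the
honest forecaster — who at each period announces the conditional law `p_t` of that period's
state given the past — fails the `ε_T`-calibration test only finitely many times. -/
theorem honest_forecaster_passes_calibration
    {Ξ : Type*} {m0 : MeasurableSpace Ξ} (ℙ : Measure Ξ) [IsProbabilityMeasure ℙ]
    (𝒢 : Filtration ℕ m0) (h0 : 𝒢 0 = ⊥)
    [MeasurableSpace Ω] [MeasurableSingletonClass Ω]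
    (X : ℕ → Ξ → Ω) (hX : ∀ t, Measurable[𝒢 (t + 1)] (X t))
    (p : ℕ → Ξ → EuclideanSpace ℝ Ω)
    (hp : ∀ t a, (fun ξ => p t ξ a) =ᵐ[ℙ]
      ℙ[(fun ξ => if X t ξ = a then (1 : ℝ) else 0) | 𝒢 t])
    (D : Finset (EuclideanSpace ℝ Ω)) (hD : ∀ t ξ, p t ξ ∈ D) :
    ∃ ε : ℕ → ℝ, (∀ T, 0 < ε T) ∧ Tendsto ε atTop (nhds 0) ∧
      ∀ᵐ ξ ∂ℙ, ∀ᶠ T : ℕ in atTop,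
        ∑ c ∈ D, ‖(T : ℝ)⁻¹ • ∑ t ∈ Finset.range T,
            (if p t ξ = c then diracVec (X t ξ) - c else 0)‖ ≤ ε T := by
  classical
  -- a uniform bound on the entries of elements of `D`
  set B : ℝ := 1 + ∑ c ∈ D, ∑ a : Ω, |c a| with hBdef
  have hsum0 : (0:ℝ) ≤ ∑ c ∈ D, ∑ a : Ω, |c a| :=
    Finset.sum_nonneg fun c _ => Finset.sum_nonneg fun a _ => abs_nonneg _
  have hB1 : 1 ≤ B := by simp only [hBdef]; linarith
  have hcB : ∀ c ∈ D, ∀ a : Ω, 1 + |c a| ≤ B := by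
    intro c hc a
    have h1 : |c a| ≤ ∑ a : Ω, |c a| :=
      Finset.single_le_sum (f := fun a => |c a|) (fun i _ => abs_nonneg _) (Finset.mem_univ a)
    have h2 : ∑ a : Ω, |c a| ≤ ∑ c ∈ D, ∑ a : Ω, |c a| :=
      Finset.single_le_sum (f := fun c => ∑ a : Ω, |c a|)
        (fun c _ => Finset.sum_nonneg fun a _ => abs_nonneg _) hc
    simp only [hBdef]; linarith
  -- measurable version of the forecasts
  set q : ℕ → Ω → Ξ → ℝ :=
    fun t a => ℙ[(fun ξ => if X t ξ = a then (1 : ℝ) else 0) | 𝒢 t] with hqdef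
  set qv : ℕ → Ξ → EuclideanSpace ℝ Ω := fun t ξ => WithLp.toLp 2 (fun a => q t a ξ) with hqvdef
  have hqm : ∀ t a, Measurable[𝒢 t] (q t a) := fun t a =>
    stronglyMeasurable_condExp.measurable
  -- the martingale differences
  set Y : EuclideanSpace ℝ Ω → Ω → ℕ → Ξ → ℝ := fun c a t ξ =>
    if qv t ξ = c then ((if X t ξ = a then (1:ℝ) else 0) - c a) else 0 with hYdef
  have hA : ∀ t c, MeasurableSet[𝒢 t] {ξ | qv t ξ = c} := by
    intro t c
    have : {ξ | qv t ξ = c} = ⋂ a : Ω, q t a ⁻¹' {c a} := by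
      ext ξ
      simp only [Set.mem_setOf_eq, Set.mem_iInter, Set.mem_preimage, Set.mem_singleton_iff,
        hqvdef]
      exact ⟨fun h a => by rw [← h], fun h => by ext a; exact h a⟩
    rw [this]
    exact MeasurableSet.iInter fun a => hqm t a (measurableSet_singleton _)
  have hIm : ∀ t a, Measurable[𝒢 (t+1)] (fun ξ => if X t ξ = a then (1:ℝ) else 0) := by
    intro t a
    exact Measurable.ite (hX t (measurableSet_singleton a)) measurable_const measurable_const
  have hYm : ∀ c a t, Measurable[𝒢 (t + 1)] (Y c a t) := by
    intro c a t
    refine Measurable.ite (𝒢.mono (Nat.le_succ t) _ (hA t c)) ?_ measurable_const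
    exact (hIm t a).sub measurable_const
  have hYb : ∀ c ∈ D, ∀ (a : Ω) t ξ, |Y c a t ξ| ≤ B := by
    intro c hc a t ξ
    have hc1 := hcB c hc a
    simp only [hYdef]
    split_ifs with h h2
    · calc |(1:ℝ) - c a| ≤ |(1:ℝ)| + |c a| := abs_sub _ _
        _ ≤ B := by rw [abs_one]; linarith
    · calc |(0:ℝ) - c a| = |c a| := by simp
        _ ≤ B := by linarith
    · simpa using le_trans zero_le_one hB1
  have hY0 : ∀ c (a : Ω) t, ℙ[Y c a t | 𝒢 t] =ᵐ[ℙ] 0 := by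
    intro c a t
    set f : Ξ → ℝ := fun ξ => if qv t ξ = c then (1:ℝ) else 0 with hfdef
    set g : Ξ → ℝ := fun ξ => (if X t ξ = a then (1:ℝ) else 0) - c a with hgdef
    have hfg : Y c a t = f * g := by
      funext ξ
      simp only [hYdef, hfdef, hgdef, Pi.mul_apply]
      split_ifs <;> ring
    have hfm : StronglyMeasurable[𝒢 t] f :=
      (Measurable.ite (hA t c) measurable_const measurable_const).stronglyMeasurable
    have hgm : Measurable g := ((hIm t a).mono (𝒢.le (t+1)) le_rfl).sub measurable_const
    have hgb : ∀ ξ, |g ξ| ≤ 1 + |c a| := by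
      intro ξ
      simp only [hgdef]
      split_ifs with h
      · calc |(1:ℝ) - c a| ≤ |(1:ℝ)| + |c a| := abs_sub _ _
          _ ≤ 1 + |c a| := by rw [abs_one]
      · calc |(0:ℝ) - c a| = |c a| := by simp
          _ ≤ 1 + |c a| := by linarith
    have hgi : Integrable g ℙ := int_bdd ℙ hgm hgb
    have hfm0 : Measurable f :=
      Measurable.ite ((𝒢.le t) _ (hA t c)) measurable_const measurable_const
    have hfgi : Integrable (f * g) ℙ := by
      refine int_bdd ℙ (hfm0.mul hgm) (C := 1 * (1 + |c a|)) ?_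
      intro ξ
      refine abs_mul_le' ?_ (hgb ξ)
      simp only [hfdef]
      split_ifs <;> simp
    have hmul : ℙ[f * g | 𝒢 t] =ᵐ[ℙ] f * ℙ[g | 𝒢 t] :=
      condExp_mul_of_stronglyMeasurable_left hfm hfgi hgi
    have hI : Integrable (fun ξ => if X t ξ = a then (1:ℝ) else 0) ℙ :=
      int_bdd ℙ ((hIm t a).mono (𝒢.le (t+1)) le_rfl) (C := 1) (fun ξ => by split_ifs <;> simp)
    have hcg : ℙ[g | 𝒢 t] =ᵐ[ℙ] fun ξ => q t a ξ - c a := by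
      have e : g = (fun ξ => if X t ξ = a then (1:ℝ) else 0) - (fun _ => c a) := rfl
      rw [e]
      refine (condExp_sub hI (integrable_const _) (𝒢 t)).trans ?_
      have h2 : ℙ[(fun _ : Ξ => c a) | 𝒢 t] = fun _ => c a := condExp_const (𝒢.le t) _
      rw [h2]
      exact Filter.EventuallyEq.rfl.sub (Filter.EventuallyEq.rfl)
    rw [hfg]
    refine hmul.trans ?_
    filter_upwards [hcg] with ξ hξ
    simp only [Pi.mul_apply, hξ, hfdef, Pi.zero_apply]
    split_ifs with h
    · have : q t a ξ = c a := by rw [← h]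
      rw [this]; ring
    · ring
  -- fourth moment bound and Borel-Cantelli sets
  set S : EuclideanSpace ℝ Ω → Ω → ℕ → Ξ → ℝ :=
    fun c a T ξ => ∑ t ∈ Finset.range T, Y c a t ξ with hSdef
  have hSm : ∀ c a T, Measurable (S c a T) := by
    intro c a T
    apply Finset.measurable_sum
    intro t _
    exact (hYm c a t).mono (𝒢.le (t+1)) le_rfl
  have hSb : ∀ c ∈ D, ∀ (a : Ω) T ξ, |S c a T ξ| ≤ B * T := by
    intro c hc a T ξ
    calc |S c a T ξ| ≤ ∑ t ∈ Finset.range T, |Y c a t ξ| := Finset.abs_sum_le_sum_abs _ _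
      _ ≤ ∑ _t ∈ Finset.range T, B := Finset.sum_le_sum fun t _ => hYb c hc a t ξ
      _ = B * T := by simp [mul_comm]
  set sset : EuclideanSpace ℝ Ω → Ω → ℕ → Set Ξ := fun c a T =>
    {ξ | ((T:ℝ)+1) ^ ((7:ℝ)/2) ≤ (S c a T ξ) ^ 4} with hssetdef
  -- Markov bound
  have hmark : ∀ c ∈ D, ∀ (a : Ω) (T : ℕ),
      ℙ (sset c a T) ≤ ENNReal.ofReal (11 * B^4 * ((T:ℝ)+1) ^ (-(3:ℝ)/2)) := by
    intro c hc a T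
    have hx : (0:ℝ) < (T:ℝ) + 1 := by positivity
    have hint4 : Integrable (fun ξ => S c a T ξ ^ 4) ℙ :=
      int_bdd ℙ ((hSm c a T).pow_const 4) (fun ξ => abs_pow_le' (hSb c hc a T ξ) 4)
    have hm := mul_meas_ge_le_integral_of_nonneg
      (Filter.Eventually.of_forall fun ξ => by positivity : 0 ≤ᵐ[ℙ] fun ξ => S c a T ξ ^ 4)
      hint4 (((T:ℝ)+1) ^ ((7:ℝ)/2))
    have hm4 := (moments ℙ 𝒢 (Y c a) B hB1 (hYm c a) (fun t ξ => hYb c hc a t ξ)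
      (fun t => hY0 c a t) T).2
    have hTb : 11 * B ^ 4 * (T:ℝ)^2 ≤ 11 * B^4 * ((T:ℝ)+1)^2 := by nlinarith [Nat.cast_nonneg (α := ℝ) T, pow_pos (lt_of_lt_of_le one_pos hB1) 4]
    have h1 : (((T:ℝ)+1) ^ ((7:ℝ)/2)) * (ℙ (sset c a T)).toReal
        ≤ 11 * B^4 * ((T:ℝ)+1)^2 := le_trans hm (le_trans hm4 hTb)
    have hxp : (0:ℝ) < ((T:ℝ)+1) ^ ((7:ℝ)/2) := Real.rpow_pos_of_pos hx _
    have h2 : (ℙ (sset c a T)).toReal ≤ 11 * B^4 * ((T:ℝ)+1) ^ (-(3:ℝ)/2) := by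
      rw [mul_comm] at h1
      have h3 := (le_div_iff₀ hxp).mpr h1
      calc (ℙ (sset c a T)).toReal
          ≤ 11 * B^4 * ((T:ℝ)+1)^2 / (((T:ℝ)+1) ^ ((7:ℝ)/2)) := h3
        _ = 11 * B^4 * ((T:ℝ)+1) ^ (-(3:ℝ)/2) := by
            rw [mul_div_assoc, ← Real.rpow_natCast ((T:ℝ)+1) 2, ← Real.rpow_sub hx]
            norm_num
    refine (ENNReal.le_ofReal_iff_toReal_le (measure_ne_top ℙ _) ?_).mpr h2
    positivity
  -- Borel-Cantelli
  have hsummable : Summable (fun T : ℕ => 11 * B^4 * ((T:ℝ)+1) ^ (-(3:ℝ)/2)) := by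
    have h1 : Summable (fun n : ℕ => (n:ℝ) ^ (-(3:ℝ)/2)) := by
      rw [show (-(3:ℝ)/2) = (-(3/2) : ℝ) by norm_num]
      exact Real.summable_nat_rpow.mpr (by norm_num)
    have h2 := (summable_nat_add_iff 1).mpr h1
    exact (h2.congr (fun n => by push_cast; ring_nf)).mul_left _
  have hBC : ∀ c ∈ D, ∀ a : Ω, ∀ᵐ ξ ∂ℙ, ∀ᶠ T : ℕ in atTop, ξ ∉ sset c a T := by
    intro c hc a
    refine ae_eventually_notMem ?_
    refine ne_top_of_le_ne_top ?_ (ENNReal.tsum_le_tsum (fun T => hmark c hc a T))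
    rw [← ENNReal.ofReal_tsum_of_nonneg (fun T => by positivity) hsummable]
    exact ENNReal.ofReal_ne_top
  -- combine a.e. statements
  have hae1 : ∀ᵐ ξ ∂ℙ, ∀ (t : ℕ) (a : Ω), p t ξ a = q t a ξ := by
    rw [ae_all_iff]
    intro t
    rw [ae_all_iff]
    intro a
    exact hp t a
  have hae2 : ∀ᵐ ξ ∂ℙ, ∀ (c : D) (a : Ω), ∀ᶠ T : ℕ in atTop, ξ ∉ sset c a T := by
    rw [ae_all_iff]
    intro c
    rw [ae_all_iff]
    intro a
    exact hBC c c.2 a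
  -- the error sequence
  refine ⟨fun T => (4 * (D.card + 1) * (Fintype.card Ω + 1) : ℝ) * ((T:ℝ)+1) ^ (-(1:ℝ)/8),
    fun T => by positivity, ?_, ?_⟩
  · have h1 : Tendsto (fun T : ℕ => ((T:ℝ)+1)) atTop atTop :=
      tendsto_atTop_add_const_right _ 1 tendsto_natCast_atTop_atTop
    have h2 : Tendsto (fun x : ℝ => x ^ (-(1:ℝ)/8)) atTop (nhds 0) := by
      rw [show (-(1:ℝ)/8) = -(1/8 : ℝ) by norm_num]
      exact tendsto_rpow_neg_atTop (by norm_num)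
    have := (h2.comp h1).const_mul (4 * ((D.card:ℝ) + 1) * ((Fintype.card Ω : ℝ) + 1))
    simpa using this
  · filter_upwards [hae1, hae2] with ξ h1 h2
    have hfin : ∀ᶠ T : ℕ in atTop,
        (∀ (c : D) (a : Ω), ξ ∉ sset c a T) ∧ 1 ≤ T :=
      (eventually_all.mpr fun c => eventually_all.mpr fun a => h2 c a).and
        (eventually_ge_atTop 1)
    filter_upwards [hfin] with T hT
    obtain ⟨hnot, hT1⟩ := hT
    have hT0 : (0:ℝ) < T := by exact_mod_cast hT1
    set x : ℝ := (T:ℝ) + 1 with hxdef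
    have hx : (0:ℝ) < x := by positivity
    have hpt : ∀ t, p t ξ = qv t ξ := fun t => by ext a; exact h1 t a
    -- coordinate bound from Borel-Cantelli
    have hScoord : ∀ c ∈ D, ∀ a : Ω, |S c a T ξ| ≤ x ^ ((7:ℝ)/8) := by
      intro c hc a
      have hns := hnot ⟨c, hc⟩ a
      simp only [hssetdef, Set.mem_setOf_eq, not_le] at hns
      by_contra hcon
      push_neg at hcon
      have h4 : (x ^ ((7:ℝ)/8)) ^ (4:ℕ) < |S c a T ξ| ^ (4:ℕ) :=
        pow_lt_pow_left₀ hcon (Real.rpow_nonneg hx.le _) (by norm_num)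
      have e1 : (x ^ ((7:ℝ)/8)) ^ (4:ℕ) = x ^ ((7:ℝ)/2) := by
        rw [← Real.rpow_natCast (x ^ ((7:ℝ)/8)) 4, ← Real.rpow_mul hx.le]
        norm_num
      have e2 : |S c a T ξ| ^ (4:ℕ) = S c a T ξ ^ (4:ℕ) := by
        rw [← abs_pow]
        exact abs_of_nonneg (by positivity)
      rw [e1, e2] at h4
      exact absurd hns (not_lt.mpr h4.le)
    -- per-term bound
    have hterm : ∀ c ∈ D, ∀ a : Ω, (T:ℝ)⁻¹ * |S c a T ξ| ≤ 4 * x ^ (-(1:ℝ)/8) := by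
      intro c hc a
      have hr : (0:ℝ) ≤ x ^ (-(1:ℝ)/8) := Real.rpow_nonneg hx.le _
      have e : x ^ ((7:ℝ)/8) = x * x ^ (-(1:ℝ)/8) := by
        nth_rewrite 2 [show x = x ^ (1:ℝ) from (Real.rpow_one x).symm]
        rw [← Real.rpow_add hx]
        norm_num
      calc (T:ℝ)⁻¹ * |S c a T ξ| ≤ (T:ℝ)⁻¹ * x ^ ((7:ℝ)/8) :=
            mul_le_mul_of_nonneg_left (hScoord c hc a) (by positivity)
        _ = ((T:ℝ)⁻¹ * x) * x ^ (-(1:ℝ)/8) := by rw [e]; ring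
        _ ≤ 4 * x ^ (-(1:ℝ)/8) := by
            refine mul_le_mul_of_nonneg_right ?_ hr
            rw [inv_mul_le_iff₀ hT0]
            have hT1' : (1:ℝ) ≤ (T:ℝ) := by exact_mod_cast hT1
            simp only [hxdef]
            linarith
    -- main computation
    calc ∑ c ∈ D, ‖(T : ℝ)⁻¹ • ∑ t ∈ Finset.range T,
            (if p t ξ = c then diracVec (X t ξ) - c else 0)‖
        ≤ ∑ c ∈ D, ∑ a : Ω, |((T : ℝ)⁻¹ • ∑ t ∈ Finset.range T,
            (if p t ξ = c then diracVec (X t ξ) - c else 0)) a| :=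
          Finset.sum_le_sum fun c _ => euclid_norm_le_sum_abs _
      _ = ∑ c ∈ D, ∑ a : Ω, (T:ℝ)⁻¹ * |S c a T ξ| := by
          refine Finset.sum_congr rfl fun c hc => Finset.sum_congr rfl fun a _ => ?_
          have hco : ((T : ℝ)⁻¹ • ∑ t ∈ Finset.range T,
              (if p t ξ = c then diracVec (X t ξ) - c else 0)) a
              = (T:ℝ)⁻¹ * S c a T ξ := by
            rw [PiLp.smul_apply, euclid_sum_apply]
            simp only [smul_eq_mul]
            congr 1
            refine Finset.sum_congr rfl fun t _ => ?_
            rw [hpt t]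
            by_cases h : qv t ξ = c
            · simp only [h, if_true, PiLp.sub_apply, hYdef, hSdef]
              simp [diracVec, eq_comm]
            · simp [h, hYdef, hSdef]
          rw [hco, abs_mul, abs_of_nonneg (by positivity : (0:ℝ) ≤ (T:ℝ)⁻¹)]
      _ ≤ ∑ c ∈ D, ∑ _a : Ω, 4 * x ^ (-(1:ℝ)/8) := by
          refine Finset.sum_le_sum fun c hc => Finset.sum_le_sum fun a _ => hterm c hc a
      _ = (D.card : ℝ) * (Fintype.card Ω : ℝ) * (4 * x ^ (-(1:ℝ)/8)) := by
          simp [Finset.sum_const, mul_assoc]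
      _ ≤ (4 * (D.card + 1) * (Fintype.card Ω + 1) : ℝ) * x ^ (-(1:ℝ)/8) := by
          have hr : (0:ℝ) ≤ x ^ (-(1:ℝ)/8) := Real.rpow_nonneg hx.le _
          have hd : (0:ℝ) ≤ D.card := Nat.cast_nonneg _
          have ho : (0:ℝ) ≤ Fintype.card Ω := Nat.cast_nonneg _
          nlinarith

end
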